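/- Let U be an operator on n qubits that is permeable on its last p qubits and V an operator on m qubits that is permeable on its first p qubits. Then (U ⊗ I^{⊗(m−p)}) and (I^{⊗(n−p)} ⊗ V), both viewed as operators on n+m−p qubits (overlapping exactly on the shared p qubits), commute: (U ⊗ I^{⊗(m−p)})(I^{⊗(n−p)} ⊗ V) = (I^{⊗(n−p)} ⊗ V)(U ⊗ I^{⊗(m−p)}). -/
import Mathlib


open Matrix

/-- Extend an operator on the first two registers (α × γ) to act on α × γ × β,
as the identity on β. -/
def liftLeft {α γ β : Type*} [DecidableEq β]
    (U : Matrix (α × γ) (α × γ) ℂ) : Matrix (α × γ × β) (α × γ × β) ℂ :=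
  Matrix.of fun x y => U (x.1, x.2.1) (y.1, y.2.1) * (if x.2.2 = y.2.2 then 1 else 0)

/-- Extend an operator on the last two registers (γ × β) to act on α × γ × β,
as the identity on α. -/
def liftRight {α γ β : Type*} [DecidableEq α]
    (V : Matrix (γ × β) (γ × β) ℂ) : Matrix (α × γ × β) (α × γ × β) ℂ :=
  Matrix.of fun x y => (if x.1 = y.1 then 1 else 0) * V x.2 y.2


lemma signNe {a b : Fin 2} (h : a ≠ b) : ((-1 : ℂ) ^ (a : ℕ)) ≠ (-1 : ℂ) ^ (b : ℕ) := by
  fin_cases a <;> fin_cases b <;> simp_all <;> norm_num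

lemma diagComm {ι : Type*} [Fintype ι] [DecidableEq ι] (d : ι → ℂ) (M : Matrix ι ι ℂ)
    (h : M * Matrix.diagonal d = Matrix.diagonal d * M) {x y : ι} (hd : d x ≠ d y) :
    M x y = 0 := by
  have h1 : (M * Matrix.diagonal d) x y = (Matrix.diagonal d * M) x y := by rw [h]
  rw [Matrix.mul_diagonal, Matrix.diagonal_mul] at h1
  by_contra hM
  exact hd (mul_left_cancel₀ hM (by rw [h1, mul_comm])).symm

/-- If U (on n qubits) is permeable on its last p qubits and V (on m qubits) is permeable
on its first p qubits, then their extensions to the joint n+m−p qubit system, overlapping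
exactly on the shared p qubits, commute. -/
theorem stmt2 (n m p : ℕ) (hpn : p ≤ n) (hpm : p ≤ m)
    (U : Matrix ((Fin (n - p) → Fin 2) × (Fin p → Fin 2))
        ((Fin (n - p) → Fin 2) × (Fin p → Fin 2)) ℂ)
    (V : Matrix ((Fin p → Fin 2) × (Fin (m - p) → Fin 2))
        ((Fin p → Fin 2) × (Fin (m - p) → Fin 2)) ℂ)
    (hU : ∀ k : Fin p,
      U * Matrix.diagonal (fun x => (-1 : ℂ) ^ (x.2 k : ℕ))
        = Matrix.diagonal (fun x => (-1 : ℂ) ^ (x.2 k : ℕ)) * U)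
    (hV : ∀ k : Fin p,
      V * Matrix.diagonal (fun x => (-1 : ℂ) ^ (x.1 k : ℕ))
        = Matrix.diagonal (fun x => (-1 : ℂ) ^ (x.1 k : ℕ)) * V) :
    (liftLeft (β := Fin (m - p) → Fin 2) U) * (liftRight (α := Fin (n - p) → Fin 2) V)
      = (liftRight (α := Fin (n - p) → Fin 2) V) * (liftLeft (β := Fin (m - p) → Fin 2) U) := by
  have hU' : ∀ x y, x.2 ≠ y.2 → U x y = 0 := by
    intro x y hxy
    obtain ⟨k, hk⟩ := Function.ne_iff.mp hxy
    exact diagComm _ U (hU k) (signNe hk)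
  have hV' : ∀ x y, x.1 ≠ y.1 → V x y = 0 := by
    intro x y hxy
    obtain ⟨k, hk⟩ := Function.ne_iff.mp hxy
    exact diagComm _ V (hV k) (signNe hk)
  ext x y
  obtain ⟨x1, x2, x3⟩ := x
  obtain ⟨y1, y2, y3⟩ := y
  rw [Matrix.mul_apply, Matrix.mul_apply]
  have L : ∑ z, liftLeft (β := Fin (m - p) → Fin 2) U (x1, x2, x3) z *
      liftRight (α := Fin (n - p) → Fin 2) V z (y1, y2, y3)
      = U (x1, x2) (y1, x2) * V (x2, x3) (y2, y3) := by
    rw [Finset.sum_eq_single ((y1, x2, x3) :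
        (Fin (n - p) → Fin 2) × (Fin p → Fin 2) × (Fin (m - p) → Fin 2))]
    · simp [liftLeft, liftRight]
    · intro z _ hz
      obtain ⟨z1, z2, z3⟩ := z
      by_cases h1 : x3 = z3
      · by_cases h2 : z1 = y1
        · have h3 : x2 ≠ z2 := fun h3 => hz (by rw [h2, ← h3, ← h1])
          have hz0 : U (x1, x2) (z1, z2) = 0 := hU' _ _ h3
          simp [liftLeft, hz0]
        · simp [liftRight, h2]
      · simp [liftLeft, h1]
    · simp
  have R : ∑ z, liftRight (α := Fin (n - p) → Fin 2) V (x1, x2, x3) z *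
      liftLeft (β := Fin (m - p) → Fin 2) U z (y1, y2, y3)
      = V (x2, x3) (x2, y3) * U (x1, x2) (y1, y2) := by
    rw [Finset.sum_eq_single ((x1, x2, y3) :
        (Fin (n - p) → Fin 2) × (Fin p → Fin 2) × (Fin (m - p) → Fin 2))]
    · simp [liftLeft, liftRight]
    · intro z _ hz
      obtain ⟨z1, z2, z3⟩ := z
      by_cases h1 : x1 = z1
      · by_cases h2 : z3 = y3
        · have h3 : x2 ≠ z2 := fun h3 => hz (by rw [← h1, ← h3, h2])
          have hz0 : V (x2, x3) (z2, z3) = 0 := hV' _ _ h3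
          simp [liftRight, hz0]
        · simp [liftLeft, h2]
      · simp [liftRight, h1]
    · simp
  rw [L, R]
  by_cases h : x2 = y2
  · subst h
    exact mul_comm _ _
  · have hVz : V (x2, x3) (y2, y3) = 0 := hV' _ _ h
    have hUz : U (x1, x2) (y1, y2) = 0 := hU' _ _ h
    rw [hVz, hUz, mul_zero, mul_zero]
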